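/- For a class 𝒢 of simple graphs on a fixed vertex type, the class of complements of graphs that can be subgraph-complemented into 𝒢 equals the class of graphs that can be subgraph-complemented into the class of complements of graphs of 𝒢. Formally, with 𝒢⁽¹⁾ = {G : ∃ S, G ⊕ S ∈ 𝒢}, we have complement(𝒢⁽¹⁾) = (complement 𝒢)⁽¹⁾. -/

import Mathlib

/-- Subgraph complement `G ⊕ S`: flip adjacency of pairs with both endpoints in `S`. -/
def SimpleGraph.scompl {V : Type*} (G : SimpleGraph V) (S : Set V) : SimpleGraph V where
  Adj u v := u ≠ v ∧ ((G.Adj u v ∧ ¬(u ∈ S ∧ v ∈ S)) ∨ (¬G.Adj u v ∧ u ∈ S ∧ v ∈ S))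
  symm := by
    constructor
    rintro u v ⟨hne, h⟩
    refine ⟨hne.symm, ?_⟩
    rcases h with ⟨h1, h2⟩ | ⟨h1, h2, h3⟩
    · exact Or.inl ⟨h1.symm, fun hb => h2 ⟨hb.2, hb.1⟩⟩
    · exact Or.inr ⟨fun h => h1 h.symm, h3, h2⟩
  loopless := ⟨fun v h => h.1 rfl⟩

lemma scompl_compl {V : Type*} (G : SimpleGraph V) (S : Set V) :
    (G.scompl S)ᶜ = Gᶜ.scompl S := by
  ext u v
  simp only [SimpleGraph.compl_adj, SimpleGraph.scompl]
  constructor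
  · rintro ⟨hne, h⟩
    by_cases hG : G.Adj u v <;> by_cases hS : u ∈ S ∧ v ∈ S <;>
      exact ⟨hne, by tauto⟩
  · rintro ⟨hne, h⟩
    exact ⟨hne, by tauto⟩

theorem compl_image_sc_one {V : Type*} (𝒢 : Set (SimpleGraph V)) :
    (fun G => Gᶜ) '' {G : SimpleGraph V | ∃ S : Set V, G.scompl S ∈ 𝒢} =
      {G : SimpleGraph V | ∃ S : Set V, G.scompl S ∈ (fun G => Gᶜ) '' 𝒢} := by
  ext H
  simp only [Set.mem_image, Set.mem_setOf_eq]
  constructor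
  · rintro ⟨G, ⟨S, hS⟩, rfl⟩
    exact ⟨S, G.scompl S, hS, scompl_compl G S⟩
  · rintro ⟨S, G0, hG0, hEq⟩
    refine ⟨Hᶜ, ⟨S, ?_⟩, compl_compl H⟩
    rw [← scompl_compl, ← hEq, compl_compl]
    exact hG0
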